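/- Let F, G be cumulative distribution functions of real random variables such that G single-crosses F from below: there exists v̄ with F(v) ≥ G(v) for v ≤ v̄ and G(v) ≥ F(v) for v ≥ v̄. If ∫ v dG(v) ≥ ∫ v dF(v), then for every increasing concave φ : ℝ → ℝ, ∫ φ(v) dG(v) ≥ ∫ φ(v) dF(v). (It suffices to prove this for distributions with finite support.) -/
import Mathlib


open Finset in
/-- Abel-summation-style representation of a finitely supported expectation
against the grid `e 0 < e 1 < ... < e (n-1)` enumerating the support set `T`. -/
private lemma sbp_aux {ι : Type*} [Fintype ι] {n : ℕ} (e : ℕ → ℝ) (T : Finset ℝ)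
    (hn : 0 < n)
    (hmem : ∀ a ∈ T, ∃ m, m < n ∧ e m = a)
    (hmono : ∀ ⦃k l : ℕ⦄, k < l → l < n → e k < e l)
    (w v : ι → ℝ) (hv : ∀ i, v i ∈ T) (h : ℝ → ℝ) :
    ∑ i, w i * h (v i) =
      (∑ i, w i) * h (e (n-1)) -
        ∑ k ∈ range (n-1), (∑ i ∈ univ.filter (fun i => v i ≤ e k), w i) *
          (h (e (k+1)) - h (e k)) := by
  classical
  have hmono_le : ∀ ⦃k l : ℕ⦄, k ≤ l → l < n → e k ≤ e l := by
    intro k l hkl hln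
    rcases eq_or_lt_of_le hkl with rfl | hlt
    · exact le_rfl
    · exact (hmono hlt hln).le
  have htel : ∀ a ∈ T, h a = h (e (n-1)) -
      ∑ k ∈ range (n-1), (if a ≤ e k then (h (e (k+1)) - h (e k)) else 0) := by
    intro a ha
    obtain ⟨m, hm, rfl⟩ := hmem a ha
    have hmn1 : m ≤ n - 1 := Nat.le_pred_of_lt hm
    have hfilter : (range (n-1)).filter (fun k => e m ≤ e k) = Ico m (n-1) := by
      ext k
      simp only [mem_filter, mem_range, mem_Ico]
      constructor
      · rintro ⟨hk, hle⟩
        refine ⟨?_, hk⟩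
        by_contra hc
        push_neg at hc
        exact absurd hle (not_le.mpr (hmono hc hm))
      · rintro ⟨hmk, hk⟩
        exact ⟨hk, hmono_le hmk (by omega)⟩
    rw [← Finset.sum_filter, hfilter, Finset.sum_Ico_eq_sub _ hmn1,
      Finset.sum_range_sub (fun k => h (e k)), Finset.sum_range_sub (fun k => h (e k))]
    ring
  calc ∑ i, w i * h (v i)
      = ∑ i, (w i * h (e (n-1)) -
          ∑ k ∈ range (n-1), w i * (if v i ≤ e k then (h (e (k+1)) - h (e k)) else 0)) := by
        refine Finset.sum_congr rfl fun i _ => ?_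
        rw [htel (v i) (hv i), mul_sub, Finset.mul_sum]
    _ = (∑ i, w i) * h (e (n-1)) -
        ∑ k ∈ range (n-1), (∑ i ∈ univ.filter (fun i => v i ≤ e k), w i) *
          (h (e (k+1)) - h (e k)) := by
        rw [Finset.sum_sub_distrib, ← Finset.sum_mul, Finset.sum_comm]
        congr 1
        refine Finset.sum_congr rfl fun k _ => ?_
        rw [Finset.sum_filter, Finset.sum_mul]
        refine Finset.sum_congr rfl fun i _ => ?_
        split <;> ring


open Finset in
/-- Classical single-crossing theorem for finitely supported distributions.
`F` is supported on values `vF : I → ℝ` with weights `p`, and `G` on `vG : J → ℝ`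
with weights `q`. -/
theorem stmt_9 {I J : Type*} [Fintype I] [Fintype J] [DecidableEq I] [DecidableEq J]
    (p : I → ℝ) (q : J → ℝ) (vF : I → ℝ) (vG : J → ℝ)
    (hp : ∀ i, 0 ≤ p i) (hq : ∀ j, 0 ≤ q j)
    (hp1 : ∑ i, p i = 1) (hq1 : ∑ j, q j = 1)
    (hsc : ∃ vbar : ℝ,
      (∀ v ≤ vbar, (∑ i ∈ univ.filter (fun i => vF i ≤ v), p i) ≥
          ∑ j ∈ univ.filter (fun j => vG j ≤ v), q j) ∧
      (∀ v ≥ vbar, (∑ j ∈ univ.filter (fun j => vG j ≤ v), q j) ≥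
          ∑ i ∈ univ.filter (fun i => vF i ≤ v), p i))
    (hmean : ∑ j, q j * vG j ≥ ∑ i, p i * vF i)
    (φ : ℝ → ℝ) (hφ : Monotone φ) (hconc : ConcaveOn ℝ Set.univ φ) :
    ∑ j, q j * φ (vG j) ≥ ∑ i, p i * φ (vF i) := by
  classical
  obtain ⟨vbar, hsc1, hsc2⟩ := hsc
  have hIne : (univ : Finset I).Nonempty := by
    by_contra hc
    rw [Finset.not_nonempty_iff_eq_empty] at hc
    rw [hc, Finset.sum_empty] at hp1
    norm_num at hp1
  set T : Finset ℝ := (univ.image vF) ∪ (univ.image vG) with hT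
  have hvFT : ∀ i, vF i ∈ T := fun i =>
    Finset.mem_union.mpr (Or.inl (Finset.mem_image_of_mem vF (Finset.mem_univ i)))
  have hvGT : ∀ j, vG j ∈ T := fun j =>
    Finset.mem_union.mpr (Or.inr (Finset.mem_image_of_mem vG (Finset.mem_univ j)))
  have hTne : T.Nonempty := by
    obtain ⟨i, _⟩ := hIne
    exact ⟨vF i, hvFT i⟩
  set n := T.card with hncard
  have hn : 0 < n := Finset.card_pos.mpr hTne
  set e : ℕ → ℝ := fun k => if h : k < n then T.orderEmbOfFin hncard.symm ⟨k, h⟩ else 0 with he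
  have hemem : ∀ k, k < n → e k ∈ T := by
    intro k hk
    simp only [he, dif_pos hk]
    exact Finset.orderEmbOfFin_mem T hncard.symm _
  have hmono : ∀ ⦃k l : ℕ⦄, k < l → l < n → e k < e l := by
    intro k l hkl hln
    have hkn : k < n := hkl.trans hln
    simp only [he, dif_pos hkn, dif_pos hln]
    exact (T.orderEmbOfFin hncard.symm).strictMono (by exact Fin.mk_lt_mk.mpr hkl)
  have hmem : ∀ a ∈ T, ∃ m, m < n ∧ e m = a := by
    intro a ha
    have hr := Finset.range_orderEmbOfFin T hncard.symm
    have : a ∈ Set.range (T.orderEmbOfFin hncard.symm) := by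
      rw [hr]; exact ha
    obtain ⟨⟨m, hm⟩, hfm⟩ := this
    exact ⟨m, hm, by simp only [he, dif_pos hm]; exact hfm⟩
  have hmono_le : ∀ ⦃k l : ℕ⦄, k ≤ l → l < n → e k ≤ e l := by
    intro k l hkl hln
    rcases eq_or_lt_of_le hkl with rfl | hlt
    · exact le_rfl
    · exact (hmono hlt hln).le
  -- supporting slope at vbar
  set g : ℝ → ℝ := fun b => (φ b - φ vbar) / (b - vbar) with hg
  set S : Finset ℝ := insert (0:ℝ) ((T.filter (fun t => vbar < t)).image g) with hS
  have hSne : S.Nonempty := ⟨0, Finset.mem_insert_self _ _⟩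
  set s : ℝ := S.max' hSne with hs
  have hs0 : (0:ℝ) ≤ s := Finset.le_max' _ _ (Finset.mem_insert_self _ _)
  have hsB : ∀ b ∈ T, vbar < b → (φ b - φ vbar) / (b - vbar) ≤ s := by
    intro b hb hlt
    exact Finset.le_max' _ _ (Finset.mem_insert_of_mem
      (Finset.mem_image_of_mem g (Finset.mem_filter.mpr ⟨hb, hlt⟩)))
  have hsA : ∀ a : ℝ, a < vbar → s ≤ (φ vbar - φ a) / (vbar - a) := by
    intro a hav
    have hsmem := S.max'_mem hSne
    rw [← hs] at hsmem
    rcases Finset.mem_insert.mp hsmem with h0 | hb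
    · rw [h0]
      apply div_nonneg
      · linarith [hφ hav.le]
      · linarith
    · obtain ⟨b, hbB, hgb⟩ := Finset.mem_image.mp hb
      have hvb : vbar < b := (Finset.mem_filter.mp hbB).2
      rw [← hgb]
      exact hconc.slope_anti_adjacent (Set.mem_univ a) (Set.mem_univ b) hav hvb
  set hh : ℝ → ℝ := fun v => φ v - s * v with hhh
  have hflat1 : ∀ a b : ℝ, a < b → b ≤ vbar → hh a ≤ hh b := by
    intro a b hab hbv
    have hba : (0:ℝ) < b - a := by linarith
    have hslope : s ≤ (φ b - φ a) / (b - a) := by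
      rcases eq_or_lt_of_le hbv with rfl | hlt
      · exact hsA a hab
      · calc s ≤ (φ vbar - φ b) / (vbar - b) := hsA b hlt
          _ ≤ (φ b - φ a) / (b - a) :=
            hconc.slope_anti_adjacent (Set.mem_univ a) (Set.mem_univ vbar) hab hlt
    have h1 : s * (b - a) ≤ φ b - φ a := (le_div_iff₀ hba).mp hslope
    have h2 : s * (b - a) = s * b - s * a := by ring
    simp only [hhh]
    linarith
  have hflat2 : ∀ a b : ℝ, vbar ≤ a → a < b → b ∈ T → hh b ≤ hh a := by
    intro a b hva hab hbT
    have hba : (0:ℝ) < b - a := by linarith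
    have hvb : vbar < b := lt_of_le_of_lt hva hab
    have hslope : (φ b - φ a) / (b - a) ≤ s := by
      rcases eq_or_lt_of_le hva with rfl | hlt
      · exact hsB b hbT hab
      · have hstep : (φ b - φ a) / (b - a) ≤ (φ b - φ vbar) / (b - vbar) := by
          have hneg := (hconc.neg).secant_mono_aux3 (Set.mem_univ vbar) (Set.mem_univ b) hlt hab
          simp only [Pi.neg_apply] at hneg
          rw [div_le_div_iff₀ (by linarith) (by linarith)] at hneg ⊢
          nlinarith [hneg]
        exact hstep.trans (hsB b hbT hvb)
    have h1 : φ b - φ a ≤ s * (b - a) := (div_le_iff₀ hba).mp hslope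
    simp only [hhh]
    nlinarith [h1]
  -- summation by parts for both measures
  have eqF := sbp_aux e T hn hmem hmono p vF hvFT hh
  have eqG := sbp_aux e T hn hmem hmono q vG hvGT hh
  have hterm : ∀ k ∈ range (n-1),
      0 ≤ ((∑ i ∈ univ.filter (fun i => vF i ≤ e k), p i) -
           (∑ j ∈ univ.filter (fun j => vG j ≤ e k), q j)) * (hh (e (k+1)) - hh (e k)) := by
    intro k hk
    rw [Finset.mem_range] at hk
    have hkn : k < n := by omega
    have hk1n : k + 1 < n := by omega
    have hab : e k < e (k+1) := hmono (Nat.lt_succ_self k) hk1n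
    have hbT : e (k+1) ∈ T := hemem _ hk1n
    have hgap : ∀ t ∈ T, e k < t → e (k+1) ≤ t := by
      intro t ht hat
      obtain ⟨m, hm, rfl⟩ := hmem t ht
      have hkm : k < m := by
        by_contra hc
        push_neg at hc
        exact absurd hat (not_lt.mpr (hmono_le hc hkn))
      exact hmono_le hkm hm
    rcases le_or_gt (e (k+1)) vbar with hbv | hvb
    · have h1 := hsc1 (e k) (by linarith)
      have h2 : hh (e k) ≤ hh (e (k+1)) := hflat1 _ _ hab hbv
      exact mul_nonneg (by linarith) (by linarith)
    · rcases le_or_gt vbar (e k) with hva | hav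
      · have h1 := hsc2 (e k) hva
        have h2 : hh (e (k+1)) ≤ hh (e k) := hflat2 _ _ hva hab hbT
        nlinarith [mul_nonneg (sub_nonneg.mpr h1) (sub_nonneg.mpr h2)]
      · -- e k < vbar < e (k+1) : distribution functions agree at e k
        have hFa : (∑ i ∈ univ.filter (fun i => vF i ≤ e k), p i) =
            ∑ i ∈ univ.filter (fun i => vF i ≤ vbar), p i := by
          apply Finset.sum_congr _ (fun _ _ => rfl)
          ext i
          simp only [Finset.mem_filter, Finset.mem_univ, true_and]
          constructor
          · intro h; linarith
          · intro h
            by_contra hc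
            push_neg at hc
            have := hgap (vF i) (hvFT i) hc
            linarith
        have hGa : (∑ j ∈ univ.filter (fun j => vG j ≤ e k), q j) =
            ∑ j ∈ univ.filter (fun j => vG j ≤ vbar), q j := by
          apply Finset.sum_congr _ (fun _ _ => rfl)
          ext j
          simp only [Finset.mem_filter, Finset.mem_univ, true_and]
          constructor
          · intro h; linarith
          · intro h
            by_contra hc
            push_neg at hc
            have := hgap (vG j) (hvGT j) hc
            linarith
        have heq : (∑ i ∈ univ.filter (fun i => vF i ≤ vbar), p i) =
            ∑ j ∈ univ.filter (fun j => vG j ≤ vbar), q j :=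
          le_antisymm (hsc2 vbar le_rfl) (hsc1 vbar le_rfl)
        rw [hFa, hGa, heq, sub_self, zero_mul]
  have hdiff : 0 ≤ ∑ j, q j * hh (vG j) - ∑ i, p i * hh (vF i) := by
    have hsum : ∑ k ∈ range (n-1),
        ((∑ i ∈ univ.filter (fun i => vF i ≤ e k), p i) -
         (∑ j ∈ univ.filter (fun j => vG j ≤ e k), q j)) * (hh (e (k+1)) - hh (e k))
        = (∑ k ∈ range (n-1), (∑ i ∈ univ.filter (fun i => vF i ≤ e k), p i) *
             (hh (e (k+1)) - hh (e k)))
          - ∑ k ∈ range (n-1), (∑ j ∈ univ.filter (fun j => vG j ≤ e k), q j) *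
             (hh (e (k+1)) - hh (e k)) := by
      rw [← Finset.sum_sub_distrib]
      exact Finset.sum_congr rfl fun k _ => by ring
    have hnn := Finset.sum_nonneg hterm
    rw [hsum] at hnn
    rw [eqF, eqG, hp1, hq1]
    linarith
  have expF : ∑ i, p i * hh (vF i) = ∑ i, p i * φ (vF i) - s * ∑ i, p i * vF i := by
    simp only [hhh]
    rw [Finset.mul_sum, ← Finset.sum_sub_distrib]
    exact Finset.sum_congr rfl fun i _ => by ring
  have expG : ∑ j, q j * hh (vG j) = ∑ j, q j * φ (vG j) - s * ∑ j, q j * vG j := by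
    simp only [hhh]
    rw [Finset.mul_sum, ← Finset.sum_sub_distrib]
    exact Finset.sum_congr rfl fun j _ => by ring
  have hmeans : 0 ≤ s * (∑ j, q j * vG j - ∑ i, p i * vF i) :=
    mul_nonneg hs0 (by linarith)
  rw [expF, expG] at hdiff
  have hexp : s * (∑ j, q j * vG j - ∑ i, p i * vF i)
      = s * ∑ j, q j * vG j - s * ∑ i, p i * vF i := by ring
  linarith
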